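/- Let P be a left cancellative monoid and let ℐ be the smallest collection of partial bijections of P that contains, for every c ∈ P, the left multiplication map λ_c (with domain all of P, range cP, and λ_c(x) = c·x), and is closed under taking inverses of partial bijections and under composition of partial bijections. Then for every s ∈ ℐ and all p, q ∈ P with p in the domain of s, the product p · q also lies in the domain of s and s(p · q) = s(p) · q. -/
import Mathlib


/-- The left inverse hull of a (left cancellative) monoid `P`: the smallest collection
of partial bijections of `P` which contains, for every `c ∈ P`, the left multiplication
map `λ_c` (with domain all of `P`, range `cP`, and `λ_c x = c * x`), and which is closed
under taking inverses of partial bijections and under composition of partial bijections.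
(The composite `e.trans f` of two `PartialEquiv`s has source
`{ x ∈ e.source : e x ∈ f.source }`, and `e.symm` swaps source and target.) -/
inductive LeftInverseHull (P : Type*) [Monoid P] : PartialEquiv P P → Prop
  | base (c : P) (e : PartialEquiv P P) (hsrc : e.source = Set.univ)
      (hfun : ∀ x : P, e x = c * x) : LeftInverseHull P e
  | symm (e : PartialEquiv P P) : LeftInverseHull P e → LeftInverseHull P e.symm
  | trans (e f : PartialEquiv P P) : LeftInverseHull P e → LeftInverseHull P f →
      LeftInverseHull P (e.trans f)

/-- **Zigzag maps intertwine right multiplication.**  Let `P` be a left cancellative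
monoid and let `ℐ` be its left inverse hull.  Then for every `s ∈ ℐ` and all `p, q ∈ P`
with `p` in the domain of `s`, the product `p · q` also lies in the domain of `s` and
`s (p · q) = s p · q`. -/
theorem leftInverseHull_apply_mul (P : Type*) [Monoid P]
    (hP : ∀ c x y : P, c * x = c * y → x = y)
    (s : PartialEquiv P P) (hs : LeftInverseHull P s)
    (p q : P) (hp : p ∈ s.source) :
    p * q ∈ s.source ∧ s (p * q) = s p * q := by
  induction hs generalizing p with
  | base c e hsrc hfun =>
      refine ⟨by simp [hsrc], ?_⟩
      rw [hfun, hfun, mul_assoc]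
  | symm e he ih =>
      have hx : e.symm p ∈ e.source := e.map_target hp
      obtain ⟨hmem, heq⟩ := ih (e.symm p) hx
      have hval : e (e.symm p * q) = p * q := by
        rw [heq, e.right_inv hp]
      refine ⟨?_, ?_⟩
      · show p * q ∈ e.target
        rw [← hval]; exact e.map_source hmem
      · show e.symm (p * q) = e.symm p * q
        rw [← hval, e.left_inv hmem]
  | trans e f he hf ihe ihf =>
      rw [PartialEquiv.trans_source] at hp ⊢
      obtain ⟨hpe, hpf⟩ := hp
      obtain ⟨h1, h2⟩ := ihe p hpe
      obtain ⟨h3, h4⟩ := ihf (e p) hpf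
      refine ⟨⟨h1, ?_⟩, ?_⟩
      · simp only [Set.mem_preimage] at hpf ⊢
        rw [h2]; exact h3
      · simp only [PartialEquiv.trans_apply]
        rw [h2, h4]
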